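/- arXiv:1504.02255 — 4 statements merged into one kernel-verified Lean document; each statement's English description precedes it below -/
import Mathlib

section
/- Let (G, (D, ⊓), δ) be a pattern structure with D a complete lattice, let ψ be a projection on D, and let A ⊆ G. If A is an extent of the projected pattern structure, i.e. A = {g ∈ G | ψ(⨅_{h ∈ A} δ(h)) ≤ ψ(δ(g))}, then A is an extent of the original pattern structure, i.e. A = {g ∈ G | ⨅_{h ∈ A} δ(h) ≤ δ(g)}. -/
/-- If `A` is an extent of the projected pattern structure, then `A` is an
extent of the original pattern structure. -/
theorem extent_of_projected_is_extent {G D : Type*} [CompleteLattice D]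
    (δ : G → D) (ψ : D → D)
    (hmono : Monotone ψ) (hcontr : ∀ x : D, ψ x ≤ x) (hidem : ∀ x : D, ψ (ψ x) = ψ x)
    (A : Set G)
    (hA : A = {g : G | ψ (⨅ h ∈ A, δ h) ≤ ψ (δ g)}) :
    A = {g : G | (⨅ h ∈ A, δ h) ≤ δ g} := by
  ext g
  constructor
  · intro hg
    exact biInf_le δ hg
  · intro hg
    rw [hA]
    exact hmono hg
end

section
/- Let (G, (D, ⊓), δ) be a pattern structure with D a complete lattice and ψ a projection on D. If (A, e) is a pattern concept of the projected pattern structure, i.e. e = ψ(⨅_{g ∈ A} δ(g)) and A = {g ∈ G | e ≤ ψ(δ(g))}, then, setting d = ⨅_{g ∈ A} δ(g), the pair (A, d) is a pattern concept of the original pattern structure (A^⋄ = d and d^⋄ = A) and e = ψ(d). -/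
/-- If `(A, e)` is a pattern concept of the projected pattern structure,
then with `d = ⨅_{g ∈ A} δ g`, the pair `(A, d)` is a pattern concept of the original
pattern structure and `e = ψ d`. -/
theorem projected_concept_from_original_concept {G D : Type*} [CompleteLattice D]
    (δ : G → D) (ψ : D → D)
    (hmono : Monotone ψ) (hcontr : ∀ x : D, ψ x ≤ x) (hidem : ∀ x : D, ψ (ψ x) = ψ x)
    (A : Set G) (e : D)
    (he : e = ψ (⨅ g ∈ A, δ g))
    (hA : A = {g : G | e ≤ ψ (δ g)}) :
    A = {g : G | (⨅ h ∈ A, δ h) ≤ δ g} ∧ e = ψ (⨅ h ∈ A, δ h) := by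
  refine ⟨?_, he⟩
  ext g
  simp only [Set.mem_setOf_eq]
  constructor
  · intro hg
    exact biInf_le δ hg
  · intro hle
    rw [hA]
    exact he ▸ hmono hle
end

section
/- Let (E, ⊓) be a meet-semilattice with a least element ⊥ and let ψ_E be a projection on E. The alphabet projection is idempotent: for every set d of sequences over E, ψ(ψ(d)) = ψ(d). -/
/-- `IsSubseq t s`: `t` is a subsequence of `s` in the generalized sense: there are
strictly increasing indices `j` with `t_i ⊓ s_{j i} = t_i` for all `i`. -/
def IsSubseq {E : Type*} [SemilatticeInf E] (t s : List E) : Prop :=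
  ∃ j : Fin t.length → Fin s.length, StrictMono j ∧
    ∀ i : Fin t.length, t.get i ⊓ s.get (j i) = t.get i

/-- A sequence is valid if none of its entries is the bottom element. -/
def ValidSeq {E : Type*} [SemilatticeInf E] [OrderBot E] (s : List E) : Prop :=
  ∀ a ∈ s, a ≠ ⊥

/-- The alphabet projection of a set of sequences: the valid sequences that are
subsequences of the element-wise `ψE`-image of some sequence of `d`. -/
def alphaProj {E : Type*} [SemilatticeInf E] [OrderBot E] (ψE : E → E)
    (d : Set (List E)) : Set (List E) :=
  {s | ValidSeq s ∧ ∃ t ∈ d, IsSubseq s (t.map ψE)}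

private lemma isSubseq_map_iff {E : Type*} [SemilatticeInf E] (f : E → E) (s t : List E) :
    IsSubseq s (t.map f) ↔ ∃ j : Fin s.length → Fin t.length, StrictMono j ∧
      ∀ i : Fin s.length, s.get i ≤ f (t.get (j i)) := by
  constructor
  · rintro ⟨j, hjm, hj⟩
    refine ⟨fun i => (j i).cast (List.length_map (as := t) f), ?_, ?_⟩
    · intro a b hab
      simpa using hjm hab
    · intro i
      have := hj i
      simp only [List.get_eq_getElem, List.getElem_map] at this ⊢
      exact inf_eq_left.mp this
  · rintro ⟨j, hjm, hj⟩
    refine ⟨fun i => (j i).cast (List.length_map (as := t) f).symm, ?_, ?_⟩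
    · intro a b hab
      simpa using hjm hab
    · intro i
      have := hj i
      simp only [List.get_eq_getElem, List.getElem_map, Fin.coe_cast]
      exact inf_eq_left.mpr this

/-- The alphabet projection is idempotent: `ψ(ψ(d)) = ψ(d)` for every set
`d` of sequences. -/
theorem alphaProj_idempotent {E : Type*} [SemilatticeInf E] [OrderBot E] (ψE : E → E)
    (hmono : Monotone ψE) (hcontr : ∀ x : E, ψE x ≤ x) (hidem : ∀ x : E, ψE (ψE x) = ψE x)
    (d : Set (List E)) :
    alphaProj ψE (alphaProj ψE d) = alphaProj ψE d := by
  ext s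
  simp only [alphaProj, Set.mem_setOf_eq]
  constructor
  · rintro ⟨hs, t, ⟨ht, u, hu, hsub'⟩, hsub⟩
    rw [isSubseq_map_iff] at hsub hsub'
    obtain ⟨j, hjm, hj⟩ := hsub
    obtain ⟨j', hjm', hj'⟩ := hsub'
    refine ⟨hs, u, hu, (isSubseq_map_iff ψE s u).mpr ⟨fun i => j' (j i), hjm'.comp hjm, ?_⟩⟩
    intro i
    calc s.get i ≤ ψE (t.get (j i)) := hj i
      _ ≤ ψE (ψE (u.get (j' (j i)))) := hmono (hj' (j i))
      _ = ψE (u.get (j' (j i))) := hidem _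
  · rintro ⟨hs, u, hu, hsub⟩
    rw [isSubseq_map_iff] at hsub
    obtain ⟨j, hjm, hj⟩ := hsub
    -- middle sequence: entries ψE (u.get (j i)) for i over s
    set t : List E := List.ofFn (fun i : Fin s.length => ψE (u.get (j i))) with ht
    have hlen : t.length = s.length := List.length_ofFn
    have htget : ∀ i : Fin t.length, t.get i = ψE (u.get (j (i.cast hlen))) := by
      intro i
      simp only [List.get_eq_getElem, ht, List.getElem_ofFn]
      rfl
    refine ⟨hs, t, ⟨?_, u, hu, ?_⟩, ?_⟩
    · intro a ha
      obtain ⟨i, rfl⟩ := List.mem_iff_get.mp ha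
      rw [htget]
      intro hbot
      exact hs (s.get (i.cast hlen)) (List.get_mem s _) (le_bot_iff.mp (hbot ▸ hj _))
    · rw [isSubseq_map_iff]
      exact ⟨fun i => j (i.cast hlen), fun a b hab => hjm (by simpa using hab),
        fun i => le_of_eq (htget i)⟩
    · rw [isSubseq_map_iff]
      refine ⟨fun i => i.cast hlen.symm, fun a b hab => by simpa using hab, fun i => ?_⟩
      rw [htget]
      simp only [Fin.cast_cast, Fin.cast_eq_self]
      rw [hidem]
      exact hj i
end

section
/- Let (G, M, I) be a formal context with G finite, and let (A, B) and (C, E) be formal concepts with C ⊊ A. Then the number of subsets S ⊆ A with S' = B is at most 2^{|A|} − 2^{|C|}; consequently the stability satisfies σ((A, B)) ≤ 1 − 1/2^{|A ∖ C|}. -/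
lemma ncard_powerset_aux {G : Type*} [Fintype G] (A : Set G) :
    {S : Set G | S ⊆ A}.ncard = 2 ^ A.ncard := by
  haveI := Fintype.ofFinite ↥A
  have h1 : {S : Set G | S ⊆ A} = 𝒫 A := rfl
  rw [h1, ← Nat.card_coe_set_eq, Nat.card_congr (Equiv.Set.powerset A),
    Nat.card_eq_fintype_card, Fintype.card_set, ← Nat.card_coe_set_eq,
    Nat.card_eq_fintype_card]

/-- Let `(A, B)` and `(C, E)` be formal concepts of a formal context with
`G` finite and `C ⊊ A`. Then the number of `S ⊆ A` with `S' = B` is at most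
`2^|A| − 2^|C|`, and the stability of `(A, B)` is at most `1 − 1/2^{|A \ C|}`. -/
theorem stability_upper_bound {G M : Type*} [Fintype G] (I : G → M → Prop)
    (A C : Set G) (B E : Set M)
    (hAB : {m : M | ∀ g ∈ A, I g m} = B) (hBA : {g : G | ∀ m ∈ B, I g m} = A)
    (hCE : {m : M | ∀ g ∈ C, I g m} = E) (hEC : {g : G | ∀ m ∈ E, I g m} = C)
    (hCA : C ⊂ A) :
    {S : Set G | S ⊆ A ∧ {m : M | ∀ g ∈ S, I g m} = B}.ncard ≤
      2 ^ A.ncard - 2 ^ C.ncard ∧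
    ({S : Set G | S ⊆ A ∧ {m : M | ∀ g ∈ S, I g m} = B}.ncard : ℝ) / 2 ^ A.ncard ≤
      1 - 1 / 2 ^ (A \ C).ncard := by
  set Good := {S : Set G | S ⊆ A ∧ {m : M | ∀ g ∈ S, I g m} = B} with hGood
  -- B ⊆ E
  have hBE : B ⊆ E := by
    rw [← hAB, ← hCE]
    intro m hm g hg
    exact hm g (hCA.1 hg)
  -- no good subset is ⊆ C
  have hdisj : Disjoint Good {S : Set G | S ⊆ C} := by
    rw [Set.disjoint_left]
    rintro S ⟨-, hS'⟩ hSC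
    have hES : E ⊆ B := by
      rw [← hS', ← hCE]
      intro m hm g hg
      exact hm g (hSC hg)
    have : E = B := le_antisymm hES hBE
    have : C = A := by rw [← hEC, ← hBA, this]
    exact hCA.2 (this ▸ le_refl A)
  have hsub : Good ∪ {S : Set G | S ⊆ C} ⊆ {S : Set G | S ⊆ A} := by
    rintro S (⟨h1, -⟩ | h2)
    · exact h1
    · exact fun x hx => hCA.1 (h2 hx)
  have hcount : Good.ncard + 2 ^ C.ncard ≤ 2 ^ A.ncard := by
    rw [← ncard_powerset_aux C, ← ncard_powerset_aux A,
      ← Set.ncard_union_eq hdisj (Set.toFinite _) (Set.toFinite _)]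
    exact Set.ncard_le_ncard hsub (Set.toFinite _)
  have h1 : Good.ncard ≤ 2 ^ A.ncard - 2 ^ C.ncard := by omega
  refine ⟨h1, ?_⟩
  have hCAcard : C.ncard < A.ncard := Set.ncard_lt_ncard hCA (Set.toFinite _)
  have hdiffcard : (A \ C).ncard = A.ncard - C.ncard :=
    Set.ncard_diff hCA.1 (Set.toFinite _)
  have hpow : (2:ℝ) ^ A.ncard > 0 := by positivity
  rw [div_le_iff₀ hpow]
  have : ((Good.ncard : ℝ)) ≤ 2 ^ A.ncard - 2 ^ C.ncard := by
    calc (Good.ncard : ℝ) ≤ ((2 ^ A.ncard - 2 ^ C.ncard : ℕ) : ℝ) := by exact_mod_cast h1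
    _ = 2 ^ A.ncard - 2 ^ C.ncard := by
        rw [Nat.cast_sub (by exact Nat.pow_le_pow_right (by norm_num) hCAcard.le)]
        push_cast; ring
  refine this.trans (le_of_eq ?_)
  rw [hdiffcard]
  rw [sub_mul, one_mul]
  congr 1
  rw [one_div, inv_mul_eq_div, eq_div_iff (by positivity : (2:ℝ) ^ (A.ncard - C.ncard) ≠ 0),
    ← pow_add]
  congr 1
  omega
end
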